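/- Let p, D ∈ ℕ with D ≥ 1, and let x ∈ ℝ^D be a vector each of whose coordinates is an integer multiple of 2^{−p}. For each index i ∈ {1, …, D} define g_i := 2^p · max(0, 2^{−p} − Σ_{j ≠ i} max(0, x_j − x_i)). If there exists an index d such that x_d > x_j for every j ≠ d, then g_d = 1 and g_i = 0 for every i ≠ d; that is, the vector (g_1, …, g_D) equals the d-th standard basis vector of ℝ^D. (This is the explicit three-layer ReLU network that computes the argmax of a fixed-precision vector.) -/

import Mathlib

/-- The explicit ReLU network computing the argmax of a fixed-precision vector:
if all coordinates of `x ∈ ℝ^D` are integer multiples of `2^{-p}` and `x` has a unique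
strict maximizer `d`, then `g_i := 2^p ⬝ max(0, 2^{-p} - Σ_{j ≠ i} max(0, x_j - x i))`
equals the `d`-th standard basis vector. -/
theorem relu_argmax (p D : ℕ) (hD : 1 ≤ D) (x : Fin D → ℝ)
    (hx : ∀ i, ∃ z : ℤ, x i = (z : ℝ) * (2 : ℝ) ^ (-(p : ℤ)))
    (d : Fin D) (hd : ∀ j, j ≠ d → x j < x d) :
    (fun i => (2 : ℝ) ^ (p : ℕ) *
        max 0 ((2 : ℝ) ^ (-(p : ℤ)) - ∑ j ∈ Finset.univ.erase i, max 0 (x j - x i))) =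
      fun i => if i = d then (1 : ℝ) else 0 := by
  have hpow : (0 : ℝ) < (2 : ℝ) ^ (-(p : ℤ)) := zpow_pos (by norm_num) _
  funext i
  by_cases hi : i = d
  · subst hi
    simp only [if_pos rfl]
    have hsum : ∑ j ∈ Finset.univ.erase i, max 0 (x j - x i) = 0 := by
      apply Finset.sum_eq_zero
      intro j hj
      have := hd j (Finset.ne_of_mem_erase hj)
      simp [max_eq_left, sub_nonpos.2 this.le]
    rw [hsum, sub_zero, max_eq_right hpow.le]
    rw [← zpow_natCast (2 : ℝ) p, ← zpow_add₀ (by norm_num : (2:ℝ) ≠ 0)]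
    simp
  · simp only [if_neg hi]
    have hdmem : d ∈ Finset.univ.erase i := Finset.mem_erase.2 ⟨Ne.symm hi, Finset.mem_univ d⟩
    have h1 : (2 : ℝ) ^ (-(p : ℤ)) ≤ max 0 (x d - x i) := by
      obtain ⟨zd, hzd⟩ := hx d
      obtain ⟨zi, hzi⟩ := hx i
      have hpos : x i < x d := hd i hi
      have hzlt : (zi : ℝ) < zd := by
        rw [hzd, hzi, mul_lt_mul_iff_left₀ hpow] at hpos; exact hpos
      have hz : (zi : ℤ) + 1 ≤ zd := by exact_mod_cast hzlt
      have hge : (2 : ℝ) ^ (-(p : ℤ)) ≤ x d - x i := by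
        rw [hzd, hzi, ← sub_mul]
        have h1' : (1 : ℝ) ≤ (zd : ℝ) - zi := by
          have : ((zi : ℝ) + 1) ≤ zd := by exact_mod_cast hz
          linarith
        nlinarith
      exact le_trans hge (le_max_right _ _)
    have hle : (2 : ℝ) ^ (-(p : ℤ)) ≤ ∑ j ∈ Finset.univ.erase i, max 0 (x j - x i) :=
      le_trans h1 (Finset.single_le_sum (f := fun j => max 0 (x j - x i)) (fun j _ => le_max_left _ _) hdmem)
    rw [max_eq_left (by linarith), mul_zero]
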